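/- arXiv:2209.02947 — 4 statements merged into one kernel-verified Lean document; each statement's English description precedes it below -/
import Mathlib

section
/- Let X be a Banach space and Y ⊆ X a 1-complemented closed subspace, i.e., there is a bounded linear projection P : X → Y with ‖P‖ = 1 and P(y) = y for all y ∈ Y. If the dual X* has the w*-sequential Kadec–Klee property (every sequence in the unit sphere of X* converging weak-star to a point of the unit sphere converges in norm), then Y* also has the w*-sequential Kadec–Klee property. -/
/-- The dual of `Z` has the w*-sequential Kadec–Klee property: every sequence of norm-one
functionals converging weak-star to a norm-one functional converges in norm. -/
def WStarSeqKK (Z : Type*) [NormedAddCommGroup Z] [NormedSpace ℝ Z] : Prop :=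
  ∀ (f : ℕ → (Z →L[ℝ] ℝ)) (g : Z →L[ℝ] ℝ), (∀ n, ‖f n‖ = 1) → ‖g‖ = 1 →
    (∀ z : Z, Filter.Tendsto (fun n => f n z) Filter.atTop (nhds (g z))) →
    Filter.Tendsto (fun n => ‖f n - g‖) Filter.atTop (nhds 0)

/-- The w*-sequential Kadec–Klee property of the dual passes to
1-complemented closed subspaces. -/
theorem stmt_0 {X : Type*} [NormedAddCommGroup X] [NormedSpace ℝ X] [CompleteSpace X]
    (Y : Submodule ℝ X) (hYc : IsClosed (Y : Set X))
    (P : X →L[ℝ] Y) (hPnorm : ‖P‖ = 1) (hPproj : ∀ y : Y, P (y : X) = y)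
    (hX : WStarSeqKK X) :
    WStarSeqKK Y := by
  intro f g hf hg hconv
  -- extension norm lemma
  have key : ∀ h : Y →L[ℝ] ℝ, ‖h ∘L P‖ = ‖h‖ := by
    intro h
    apply le_antisymm
    · calc ‖h ∘L P‖ ≤ ‖h‖ * ‖P‖ := ContinuousLinearMap.opNorm_comp_le _ _
        _ = ‖h‖ := by rw [hPnorm, mul_one]
    · refine ContinuousLinearMap.opNorm_le_bound _ (norm_nonneg _) (fun y => ?_)
      have : h y = (h ∘L P) (y : X) := by simp [hPproj y]
      rw [this]
      calc ‖(h ∘L P) (y : X)‖ ≤ ‖h ∘L P‖ * ‖(y : X)‖ :=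
            ContinuousLinearMap.le_opNorm _ _
        _ = ‖h ∘L P‖ * ‖y‖ := by rw [Submodule.norm_coe]
  have hX' := hX (fun n => f n ∘L P) (g ∘L P)
    (fun n => by rw [key, hf n]) (by rw [key, hg])
    (fun x => hconv (P x))
  have hle : ∀ n, ‖f n - g‖ ≤ ‖(f n ∘L P) - (g ∘L P)‖ := by
    intro n
    have : (f n ∘L P) - (g ∘L P) = (f n - g) ∘L P := by
      ext x; simp
    rw [this, key]
  exact squeeze_zero (fun n => norm_nonneg _) hle hX'
end

section
/- Let X and Y be Banach spaces such that every bounded linear operator from X to Y* that attains its norm is finite rank, and suppose the norm-attaining operators are not dense in L(X, Y*). If X ⊗̂_π Y is identified with a predual so that each z ∈ X ⊗̂_π Y attaining its projective norm at a representation z = Σ λ_n x_n ⊗ y_n forces a norm-one T ∈ L(X,Y*) with T(x_n)(y_n) = 1 for all n, then every element of NA_π(X ⊗̂_π Y) lies in the (algebraic) tensor product X ⊗ Y whenever additionally Y is a Hilbert space: concretely, if X is infinite dimensional with norm locally depending on finitely many coordinates and Y is an infinite-dimensional Hilbert space, then NA_π(X ⊗̂_π Y) ⊆ X ⊗ Y.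 -/
universe u

open scoped InnerProductSpace
set_option maxHeartbeats 2000000

/-- `m : X → Y → Z` realises `Z` as the projective tensor product `X ⊗̂_π Y`:
elementary tensors have norm `‖x‖·‖y‖`, their span is dense, and every bounded bilinear
map into a Banach space factors through `Z` with the same norm. -/
def IsProjTensorProd {X Y Z : Type*} [NormedAddCommGroup X] [NormedSpace ℝ X]
    [NormedAddCommGroup Y] [NormedSpace ℝ Y] [NormedAddCommGroup Z] [NormedSpace ℝ Z]
    (m : X →L[ℝ] Y →L[ℝ] Z) : Prop :=
  (∀ (x : X) (y : Y), ‖m x y‖ = ‖x‖ * ‖y‖) ∧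
  (Submodule.span ℝ (Set.range fun p : X × Y => m p.1 p.2)).topologicalClosure = ⊤ ∧
  (∀ (W : Type u) [NormedAddCommGroup W] [NormedSpace ℝ W] [CompleteSpace W]
    (B : X →L[ℝ] Y →L[ℝ] W), ∃ T : Z →L[ℝ] W, ‖T‖ = ‖B‖ ∧ ∀ (x : X) (y : Y), T (m x y) = B x y)

/-- The norm of `X` locally depends upon finitely many coordinates. -/
def NormLocallyDependsOnFinitelyManyCoordinates (X : Type*) [NormedAddCommGroup X]
    [NormedSpace ℝ X] : Prop :=
  ∀ x : X, x ≠ 0 → ∃ ε > (0 : ℝ), ∃ N : ℕ, ∃ f : Fin N → (X →L[ℝ] ℝ),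
    ∃ φ : (Fin N → ℝ) → ℝ, Continuous φ ∧
      ∀ y : X, ‖y - x‖ < ε → ‖y‖ = φ (fun i => f i y)

/-- If `X` is an infinite-dimensional Banach space whose norm locally
depends upon finitely many coordinates and `Y` is an infinite-dimensional Hilbert space,
then every tensor attaining its projective norm lies in the algebraic tensor product
`X ⊗ Y` (the span of the elementary tensors). -/
theorem stmt_10 {X Y Z : Type*}
    [NormedAddCommGroup X] [NormedSpace ℝ X] [CompleteSpace X]
    [NormedAddCommGroup Y] [InnerProductSpace ℝ Y] [CompleteSpace Y]
    [NormedAddCommGroup Z] [NormedSpace ℝ Z] [CompleteSpace Z]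
    (hXinf : ¬ FiniteDimensional ℝ X) (hYinf : ¬ FiniteDimensional ℝ Y)
    (hXloc : NormLocallyDependsOnFinitelyManyCoordinates X)
    (m : X →L[ℝ] Y →L[ℝ] Z) (hm : IsProjTensorProd.{0} m) :
    ∀ z : Z,
      (∃ (x : ℕ → X) (y : ℕ → Y), Summable (fun n => ‖x n‖ * ‖y n‖) ∧
        z = ∑' n : ℕ, m (x n) (y n) ∧ ‖z‖ = ∑' n : ℕ, ‖x n‖ * ‖y n‖) →
      z ∈ Submodule.span ℝ (Set.range fun p : X × Y => m p.1 p.2) := by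
  classical
  rintro z ⟨x, y, hsum, hz, hnorm⟩
  by_cases hz0 : z = 0
  · simpa [hz0] using (Submodule.span ℝ (Set.range fun p : X × Y => m p.1 p.2)).zero_mem
  -- some term is nonzero
  have hex : ∃ n, x n ≠ 0 ∧ y n ≠ 0 := by
    by_contra hc
    push_neg at hc
    have : ∀ n, ‖x n‖ * ‖y n‖ = 0 := by
      intro n
      rcases Classical.em (x n = 0) with h | h
      · simp [h]
      · simp [hc n h]
    exact hz0 (norm_eq_zero.mp (by rw [hnorm]; simp [this]))
  obtain ⟨n₀, hx0, hy0⟩ := hex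
  -- Hahn-Banach functional
  obtain ⟨f, hf1, hfz⟩ := exists_dual_vector ℝ z (norm_ne_zero_iff.mpr hz0)
  -- the bilinear form B x y = f (m x y)
  set B : X →L[ℝ] Y →L[ℝ] ℝ := (ContinuousLinearMap.compL ℝ Y Z ℝ f).comp m with hBdef
  have hBxy : ∀ (a : X) (b : Y), B a b = f (m a b) := fun _ _ => rfl
  have hBle : ∀ (a : X) (b : Y), |B a b| ≤ ‖a‖ * ‖b‖ := by
    intro a b
    calc |B a b| = ‖f (m a b)‖ := rfl
    _ ≤ ‖f‖ * ‖m a b‖ := f.le_opNorm _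
    _ = ‖a‖ * ‖b‖ := by rw [hf1, hm.1, one_mul]
  -- summability of the tensor series
  have hsme : Summable (fun n => m (x n) (y n)) := by
    refine Summable.of_norm ?_
    simpa only [hm.1] using hsum
  -- termwise equality B (x n) (y n) = ‖x n‖ * ‖y n‖
  have hterm : ∀ n, B (x n) (y n) = ‖x n‖ * ‖y n‖ := by
    have hBsum : Summable (fun n => B (x n) (y n)) := by
      refine Summable.of_norm (hsum.of_nonneg_of_le (fun n => norm_nonneg _) ?_)
      intro n; exact hBle _ _
    have hfz' : ∑' n, B (x n) (y n) = ∑' n, ‖x n‖ * ‖y n‖ := by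
      have : f z = ∑' n, B (x n) (y n) := by
        rw [hz, f.map_tsum hsme]; rfl
      rw [← this, ← hnorm]
      simpa using hfz
    -- a_n := ‖x n‖ * ‖y n‖ - B (x n) (y n) is nonneg, summable, tsum = 0
    have hanneg : ∀ n, 0 ≤ ‖x n‖ * ‖y n‖ - B (x n) (y n) := by
      intro n
      have := (abs_le.mp (hBle (x n) (y n))).2
      linarith
    have hasum : Summable (fun n => ‖x n‖ * ‖y n‖ - B (x n) (y n)) := hsum.sub hBsum
    have hatsum : ∑' n, (‖x n‖ * ‖y n‖ - B (x n) (y n)) = 0 := by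
      rw [Summable.tsum_sub hsum hBsum, hfz', sub_self]
    intro n
    have h1 : ‖x n‖ * ‖y n‖ - B (x n) (y n) ≤ 0 := by
      rw [← hatsum]
      exact Summable.le_tsum hasum n (fun j _ => hanneg j)
    have := hanneg n
    linarith
  -- define S : X →ₗ[ℝ] Y via Riesz representation
  have hsymm_add : ∀ (a b : Y →L[ℝ] ℝ),
      (InnerProductSpace.toDual ℝ Y).symm (a + b)
        = (InnerProductSpace.toDual ℝ Y).symm a + (InnerProductSpace.toDual ℝ Y).symm b :=
    fun a b => map_add _ a b
  let S : X →ₗ[ℝ] Y :=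
    { toFun := fun a => (InnerProductSpace.toDual ℝ Y).symm (B a)
      map_add' := by
        intro a b
        show (InnerProductSpace.toDual ℝ Y).symm (B (a + b)) = _
        rw [map_add]
        exact hsymm_add _ _
      map_smul' := by
        intro c a
        show (InnerProductSpace.toDual ℝ Y).symm (B (c • a)) = _
        rw [map_smul]
        simp only [map_smulₛₗ, starRingEnd_apply, star_trivial, RingHom.id_apply] }
  have hSinner : ∀ (a : X) (b : Y), ⟪S a, b⟫_ℝ = B a b := by
    intro a b
    exact InnerProductSpace.toDual_symm_apply
  have hSnorm : ∀ a : X, ‖S a‖ ≤ ‖a‖ := by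
    intro a
    have : ‖S a‖ = ‖B a‖ := (InnerProductSpace.toDual ℝ Y).symm.norm_map _
    rw [this]
    refine ContinuousLinearMap.opNorm_le_bound _ (norm_nonneg a) (fun b => ?_)
    exact hBle a b
  -- S attains its norm at x n₀
  have hSx0 : ‖S (x n₀)‖ = ‖x n₀‖ := by
    have h1 : ‖x n₀‖ * ‖y n₀‖ ≤ ‖S (x n₀)‖ * ‖y n₀‖ := by
      calc ‖x n₀‖ * ‖y n₀‖ = B (x n₀) (y n₀) := (hterm n₀).symm
      _ = ⟪S (x n₀), y n₀⟫_ℝ := (hSinner _ _).symm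
      _ ≤ ‖S (x n₀)‖ * ‖y n₀‖ := real_inner_le_norm _ _
    have hy0' : (0:ℝ) < ‖y n₀‖ := norm_pos_iff.mpr hy0
    exact le_antisymm (hSnorm _) (le_of_mul_le_mul_right h1 hy0')
  -- local dependence at x n₀
  obtain ⟨ε, hε, N, g, φ, hφc, hφ⟩ := hXloc (x n₀) hx0
  -- kernel inclusion
  have hker : ∀ h : X, (∀ i, g i h = 0) → S h = 0 := by
    intro h hgh
    by_cases hh0 : h = 0
    · simp [hh0]
    set t : ℝ := ε / (2 * ‖h‖) with ht
    have hhn : (0:ℝ) < ‖h‖ := norm_pos_iff.mpr hh0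
    have htpos : 0 < t := div_pos hε (by linarith)
    have hth : ‖t • h‖ < ε := by
      rw [norm_smul, Real.norm_eq_abs, abs_of_pos htpos, ht]
      rw [div_mul_eq_mul_div, div_lt_iff₀ (by linarith)]
      nlinarith
    have hnormpm : ∀ s : ℝ, |s| = t → ‖x n₀ + s • h‖ = ‖x n₀‖ := by
      intro s hs
      have hsh : ‖(x n₀ + s • h) - x n₀‖ < ε := by
        rw [add_sub_cancel_left, norm_smul, Real.norm_eq_abs, hs]
        calc t * ‖h‖ = ‖t • h‖ := by
              rw [norm_smul, Real.norm_eq_abs, abs_of_pos htpos]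
        _ < ε := hth
      have h1 : ‖x n₀ + s • h‖ = φ (fun i => g i (x n₀ + s • h)) := hφ _ hsh
      have h2 : ‖x n₀‖ = φ (fun i => g i (x n₀)) := hφ _ (by simp [hε])
      rw [h1, h2]
      congr 1
      funext i
      simp [map_add, map_smul, hgh i]
    -- parallelogram
    have ha : ‖S (x n₀) + t • S h‖ ≤ ‖x n₀‖ := by
      have : S (x n₀) + t • S h = S (x n₀ + t • h) := by simp [map_add, map_smul]
      rw [this]
      calc ‖S (x n₀ + t • h)‖ ≤ ‖x n₀ + t • h‖ := hSnorm _
      _ = ‖x n₀‖ := hnormpm t (abs_of_pos htpos)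
    have hb : ‖S (x n₀) - t • S h‖ ≤ ‖x n₀‖ := by
      have : S (x n₀) - t • S h = S (x n₀ + (-t) • h) := by
        simp [map_add, map_smul, sub_eq_add_neg, neg_smul]
      rw [this]
      calc ‖S (x n₀ + (-t) • h)‖ ≤ ‖x n₀ + (-t) • h‖ := hSnorm _
      _ = ‖x n₀‖ := hnormpm (-t) (by rw [abs_neg, abs_of_pos htpos])
    have hpar := parallelogram_law_with_norm ℝ (S (x n₀)) (t • S h)
    have hSh2 : ‖t • S h‖ ^ 2 ≤ 0 := by
      have h1 : ‖S (x n₀) + t • S h‖ ^ 2 ≤ ‖x n₀‖ ^ 2 := by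
        apply sq_le_sq' _ ha; nlinarith [norm_nonneg (S (x n₀) + t • S h)]
      have h2 : ‖S (x n₀) - t • S h‖ ^ 2 ≤ ‖x n₀‖ ^ 2 := by
        apply sq_le_sq' _ hb; nlinarith [norm_nonneg (S (x n₀) - t • S h)]
      have h3 : ‖S (x n₀)‖ ^ 2 = ‖x n₀‖ ^ 2 := by rw [hSx0]
      nlinarith [hpar]
    have : ‖t • S h‖ = 0 := by nlinarith [norm_nonneg (t • S h)]
    have : t • S h = 0 := norm_eq_zero.mp this
    have := smul_eq_zero.mp this
    rcases this with h | h
    · exact absurd h (ne_of_gt htpos)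
    · exact h
  -- finite dimensionality of range S
  set pr : X →ₗ[ℝ] (Fin N → ℝ) := LinearMap.pi (fun i => (g i : X →ₗ[ℝ] ℝ)) with hpr
  have hKer : LinearMap.ker pr ≤ LinearMap.ker S := by
    intro h hh
    simp only [LinearMap.mem_ker] at hh ⊢
    apply hker
    intro i
    have := congrFun hh i
    simpa [pr] using this
  haveI : FiniteDimensional ℝ (X ⧸ LinearMap.ker pr) :=
    (LinearMap.quotKerEquivRange pr).symm.finiteDimensional
  have hrange : LinearMap.range S = LinearMap.range ((LinearMap.ker pr).liftQ S hKer) := by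
    exact (Submodule.range_liftQ _ _ _).symm
  haveI hFfd : FiniteDimensional ℝ (LinearMap.range S) := by
    rw [hrange]; infer_instance
  -- all relevant y's lie in range S
  set y' : ℕ → Y := fun n => if x n = 0 then 0 else y n with hy'
  have hy'mem : ∀ n, y' n ∈ LinearMap.range S := by
    intro n
    by_cases hxn : x n = 0
    · simp [y', hxn]
    by_cases hyn : y n = 0
    · simp [y', hxn, hyn]
    -- equality in Cauchy-Schwarz
    have hxnn : (0:ℝ) < ‖x n‖ := norm_pos_iff.mpr hxn
    have hynn : (0:ℝ) < ‖y n‖ := norm_pos_iff.mpr hyn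
    have h1 : ⟪S (x n), y n⟫_ℝ = ‖x n‖ * ‖y n‖ := by rw [hSinner, hterm]
    have hSxn : ‖S (x n)‖ = ‖x n‖ := by
      refine le_antisymm (hSnorm _) ?_
      have : ‖x n‖ * ‖y n‖ ≤ ‖S (x n)‖ * ‖y n‖ := by
        rw [← h1]; exact real_inner_le_norm _ _
      exact le_of_mul_le_mul_right this hynn
    have hSxn0 : S (x n) ≠ 0 := by
      intro hc
      rw [hc, norm_zero] at hSxn
      exact hxn (norm_eq_zero.mp hSxn.symm)
    have heq : ‖⟪S (x n), y n⟫_ℝ‖ = ‖S (x n)‖ * ‖y n‖ := by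
      rw [h1, hSxn, Real.norm_eq_abs, abs_of_pos (mul_pos hxnn hynn)]
    obtain ⟨r, _, hr⟩ := (norm_inner_eq_norm_iff hSxn0 hyn).mp heq
    rw [hy']
    simp only [if_neg hxn]
    rw [hr]
    exact Submodule.smul_mem _ _ ⟨x n, rfl⟩
  -- expand in an orthonormal basis of F
  set F := LinearMap.range S with hF
  let b := stdOrthonormalBasis ℝ F
  set k := Module.finrank ℝ F with hk
  -- coefficients
  set c : Fin k → ℕ → ℝ := fun i n => ⟪((b i : F) : Y), y' n⟫_ℝ with hc
  have hcbound : ∀ i n, |c i n| ≤ ‖y' n‖ := by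
    intro i n
    calc |c i n| ≤ ‖((b i : F) : Y)‖ * ‖y' n‖ := abs_real_inner_le_norm _ _
    _ = ‖y' n‖ := by
        rw [show ‖((b i : F) : Y)‖ = 1 from ?_, one_mul]
        have := b.orthonormal.1 i
        rw [← this]
        rfl
  have hy'norm : ∀ n, ‖y' n‖ ≤ ‖y n‖ := by
    intro n
    by_cases hxn : x n = 0 <;> simp [y', hxn]
  -- expansion of y' n
  have hy'exp : ∀ n, y' n = ∑ i : Fin k, c i n • ((b i : F) : Y) := by
    intro n
    have hmem := hy'mem n
    set u : F := ⟨y' n, hmem⟩ with hu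
    have hrep := b.sum_repr' u
    have := congrArg (Submodule.subtype F) hrep
    simp only [map_sum, map_smul, Submodule.coe_subtype] at this
    rw [show y' n = (u : Y) from rfl, ← this]
    apply Finset.sum_congr rfl
    intro i _
    congr 1
  -- summability of coefficient-weighted series
  have hcsum : ∀ i : Fin k, Summable (fun n => c i n • x n) := by
    intro i
    refine Summable.of_norm (hsum.of_nonneg_of_le (fun n => norm_nonneg _) ?_)
    intro n
    rw [norm_smul, Real.norm_eq_abs]
    calc |c i n| * ‖x n‖ ≤ ‖y' n‖ * ‖x n‖ :=
          mul_le_mul_of_nonneg_right (hcbound i n) (norm_nonneg _)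
    _ ≤ ‖y n‖ * ‖x n‖ := mul_le_mul_of_nonneg_right (hy'norm n) (norm_nonneg _)
    _ = ‖x n‖ * ‖y n‖ := mul_comm _ _
  -- rewrite z
  have hz' : z = ∑ i : Fin k, m (∑' n, c i n • x n) ((b i : F) : Y) := by
    have step1 : ∀ n, m (x n) (y n) = ∑ i : Fin k, c i n • m (x n) ((b i : F) : Y) := by
      intro n
      by_cases hxn : x n = 0
      · simp [hxn]
      · have : y n = y' n := by simp [y', hxn]
        rw [this, hy'exp n, map_sum]
        simp
    have hsummand : ∀ i : Fin k, Summable (fun n => c i n • m (x n) ((b i : F) : Y)) := by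
      intro i
      have : (fun n => c i n • m (x n) ((b i : F) : Y))
          = (fun n => (m.flip ((b i : F) : Y)) (c i n • x n)) := by
        funext n; simp
      rw [this]
      exact (hcsum i).map (m.flip ((b i : F) : Y) : X →L[ℝ] Z)
        (m.flip ((b i : F) : Y)).continuous
    calc z = ∑' n, m (x n) (y n) := hz
    _ = ∑' n, ∑ i : Fin k, c i n • m (x n) ((b i : F) : Y) := by
        exact tsum_congr step1
    _ = ∑ i : Fin k, ∑' n, c i n • m (x n) ((b i : F) : Y) :=
        Summable.tsum_finsetSum (fun i _ => hsummand i)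
    _ = ∑ i : Fin k, m (∑' n, c i n • x n) ((b i : F) : Y) := by
        apply Finset.sum_congr rfl
        intro i _
        have := ((m.flip ((b i : F) : Y)) : X →L[ℝ] Z).map_tsum (hcsum i)
        simp only [ContinuousLinearMap.flip_apply, map_smul] at this ⊢
        rw [this]
  rw [hz']
  apply Submodule.sum_mem
  intro i _
  exact Submodule.subset_span ⟨(∑' n, c i n • x n, ((b i : F) : Y)), rfl⟩
end

section
/- Let X be a Banach space whose dual X* has the w*-sequential Kadec–Klee property and suppose X is reflexive. Then the norm of X is strongly subdifferentiable: for every ε > 0 and x ∈ S_X there exists η > 0 such that whenever y* ∈ S_{X*} satisfies y*(x) > 1 − η, there exists x* ∈ S_{X*} with x*(x) = 1 and ‖x* − y*‖ < ε. -/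
open Filter Topology Metric Set NormedSpace

/-- A cluster point of a sequence with values in a closed set lies in the set. -/
lemma aux_clusterPt_mem {α : Type*} [TopologicalSpace α] {u : ℕ → α} {c : α}
    {S : Set α} (hS : IsClosed S) (hu : ∀ n, u n ∈ S)
    (hc : ClusterPt c (Filter.map u Filter.atTop)) : c ∈ S := by
  have hle : Filter.map u Filter.atTop ≤ 𝓟 S :=
    le_principal_iff.2 (Filter.mem_map.2 (Filter.Eventually.of_forall hu))
  have h2 := hc.mono hle
  rw [← hS.closure_eq]
  exact mem_closure_iff_clusterPt.2 h2

/-- A cluster point of a convergent sequence equals its limit (T2). -/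
lemma aux_clusterPt_eq {α : Type*} [TopologicalSpace α] [T2Space α] {u : ℕ → α} {c L : α}
    (hc : ClusterPt c (Filter.map u Filter.atTop))
    (hL : Filter.Tendsto u Filter.atTop (𝓝 L)) : c = L :=
  eq_of_nhds_neBot (hc.mono hL)

/-- If `X` is a reflexive Banach space whose dual has the w*-sequential
Kadec–Klee property, then the norm of `X` is strongly subdifferentiable (stated via the
ε-η characterisation). -/
theorem stmt_13 {X : Type*} [NormedAddCommGroup X] [NormedSpace ℝ X] [CompleteSpace X]
    (hrefl : Function.Surjective (NormedSpace.inclusionInDoubleDual ℝ X))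
    (hKK : WStarSeqKK X) :
    ∀ ε > (0 : ℝ), ∀ x : X, ‖x‖ = 1 → ∃ η > (0 : ℝ),
      ∀ f : X →L[ℝ] ℝ, ‖f‖ = 1 → f x > 1 - η →
        ∃ g : X →L[ℝ] ℝ, ‖g‖ = 1 ∧ g x = 1 ∧ ‖g - f‖ < ε := by
  intro ε hε x hx
  by_contra hcon
  push_neg at hcon
  -- extract a bad sequence
  have hsel : ∀ n : ℕ, ∃ f : X →L[ℝ] ℝ, ‖f‖ = 1 ∧ f x > 1 - 1/(n+1) ∧
      ∀ g : X →L[ℝ] ℝ, ‖g‖ = 1 → g x = 1 → ε ≤ ‖g - f‖ := by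
    intro n
    obtain ⟨f, hf1, hfx, hbad⟩ := hcon (1/(n+1)) (by positivity)
    exact ⟨f, hf1, hfx, hbad⟩
  choose fn hfn1 hfnx hfnbad using hsel
  -- the closed span of the sequence
  set Z : Submodule ℝ (X →L[ℝ] ℝ) := (Submodule.span ℝ (Set.range fn)).topologicalClosure with hZdef
  have hZclosed : IsClosed (Z : Set (X →L[ℝ] ℝ)) := Submodule.isClosed_topologicalClosure _
  have hfnZ : ∀ n, fn n ∈ Z := fun n =>
    Submodule.le_topologicalClosure _ (Submodule.subset_span ⟨n, rfl⟩)
  have hsep : TopologicalSpace.IsSeparable (Z : Set (X →L[ℝ] ℝ)) := by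
    have h1 := ((Set.countable_range fn).isSeparable.span (R := ℝ)).closure
    rwa [hZdef, Submodule.topologicalClosure_coe]
  obtain ⟨c, hc_count, hc_sub⟩ := hsep
  obtain ⟨w, hw⟩ := (hc_count.insert (0 : X →L[ℝ] ℝ)).exists_eq_range
    (Set.insert_nonempty _ _)
  have hZw : (Z : Set (X →L[ℝ] ℝ)) ⊆ closure (Set.range w) := by
    rw [← hw]; exact hc_sub.trans (closure_mono (Set.subset_insert _ _))
  -- a countable norming family for Z
  have hDex : ∀ p : ℕ × ℕ, ∃ z : X, ‖z‖ < 1 ∧ ‖w p.1‖ - 1/(p.2+1) < ‖(w p.1) z‖ :=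
    fun p => (w p.1).exists_lt_apply_of_lt_opNorm
      (sub_lt_self _ (by positivity))
  choose D hD1 hD2 using hDex
  have normZ : ∀ v : X →L[ℝ] ℝ, v ∈ Z → (∀ p : ℕ × ℕ, v (D p) = 0) → v = 0 := by
    intro v hv h0
    have key : ∀ δ : ℝ, 0 < δ → ‖v‖ ≤ 3 * δ := by
      intro δ hδ
      obtain ⟨y, hy_mem, hy⟩ := Metric.mem_closure_iff.mp (hZw hv) δ hδ
      obtain ⟨j, rfl⟩ := hy_mem
      obtain ⟨k, hk⟩ := exists_nat_one_div_lt hδ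
      have h1 : ‖w j‖ - 1/(k+1) < ‖(w j) (D (j,k))‖ := hD2 (j,k)
      have h2 : ‖(w j) (D (j,k))‖ ≤ ‖w j - v‖ := by
        calc ‖(w j) (D (j,k))‖ = ‖(w j - v) (D (j,k))‖ := by
              simp [ContinuousLinearMap.sub_apply, h0 (j,k)]
          _ ≤ ‖w j - v‖ * ‖D (j,k)‖ := (w j - v).le_opNorm _
          _ ≤ ‖w j - v‖ * 1 := by
              gcongr
              exact (hD1 (j,k)).le
          _ = ‖w j - v‖ := mul_one _
      have h3 : ‖v - w j‖ < δ := by rwa [← dist_eq_norm]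
      have h4 : ‖w j - v‖ < δ := by rwa [norm_sub_rev]
      have h5 : ‖v‖ ≤ ‖v - w j‖ + ‖w j‖ := by
        simpa using norm_add_le (v - w j) (w j)
      have hk' : (1 : ℝ)/(k+1) < δ := hk
      linarith
    have hv0 : ‖v‖ ≤ 0 := by
      by_contra hpos
      push_neg at hpos
      have := key (‖v‖/4) (by linarith)
      linarith
    exact norm_le_zero_iff.mp hv0
  -- cluster points (in the weak-star topology) of sequences in Z lie in Z (uses reflexivity)
  have clusterZ : ∀ (u : ℕ → X →L[ℝ] ℝ), (∀ n, u n ∈ Z) → ∀ h : WeakDual ℝ X,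
      ClusterPt h (Filter.map (fun n => StrongDual.toWeakDual (u n)) Filter.atTop) →
      WeakDual.toStrongDual h ∈ Z := by
    intro u huZ h hcl
    by_contra hnot
    obtain ⟨Φ, t, hΦZ, hΦh⟩ :=
      geometric_hahn_banach_closed_point (Z.convex) hZclosed hnot
    have hΦ0 : ∀ v ∈ Z, Φ v = 0 := by
      intro v hv
      by_contra hne
      have h1 : Φ (((t+1)/Φ v) • v) < t := hΦZ _ (Z.smul_mem _ hv)
      rw [map_smul, smul_eq_mul, div_mul_cancel₀ _ hne] at h1
      linarith
    have ht0 : 0 < t := by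
      have := hΦZ 0 Z.zero_mem
      simpa using this
    obtain ⟨z₀, hz₀⟩ := hrefl Φ
    have hΦeval : ∀ v : X →L[ℝ] ℝ, Φ v = v z₀ := by
      intro v
      rw [← hz₀, NormedSpace.dual_def]
    have hz₀Z : ∀ n, u n z₀ = 0 := fun n => by
      rw [← hΦeval]; exact hΦ0 (u n) (huZ n)
    have hclz : ClusterPt (h z₀)
        (Filter.map (fun n => (StrongDual.toWeakDual (u n)) z₀) Filter.atTop) := by
      have := hcl.map ((WeakDual.eval_continuous z₀).continuousAt) Filter.tendsto_map
      rwa [Filter.map_map] at this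
    have hzero : Filter.Tendsto (fun n => (StrongDual.toWeakDual (u n)) z₀)
        Filter.atTop (𝓝 (0 : ℝ)) := by
      have heq : (fun n => (StrongDual.toWeakDual (u n)) z₀) = fun _ => (0 : ℝ) :=
        funext fun n => hz₀Z n
      rw [heq]; exact tendsto_const_nhds
    have hh0 : h z₀ = 0 := aux_clusterPt_eq hclz hzero
    have : Φ (WeakDual.toStrongDual h) = 0 := by
      rw [hΦeval, WeakDual.toStrongDual_apply, hh0]
    linarith [hΦh]
  -- diagonal extraction on the countable norming family
  have haIcc : ∀ n, (fun p : ℕ × ℕ => fn n (D p)) ∈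
      Set.univ.pi (fun _ : ℕ × ℕ => Icc (-1:ℝ) 1) := by
    intro n
    intro p _
    have h1 : ‖fn n (D p)‖ ≤ 1 := by
      calc ‖fn n (D p)‖ ≤ ‖fn n‖ * ‖D p‖ := (fn n).le_opNorm _
        _ ≤ 1 * 1 := by
            apply mul_le_mul (le_of_eq (hfn1 n)) (hD1 p).le (norm_nonneg _) zero_le_one
        _ = 1 := one_mul _
    rw [Real.norm_eq_abs, abs_le] at h1
    exact ⟨h1.1, h1.2⟩
  obtain ⟨L, _hL, φ, hφmono, hφtend⟩ :=
    (isCompact_univ_pi fun _ : ℕ × ℕ => isCompact_Icc).tendsto_subseq haIcc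
  have hφp : ∀ p : ℕ × ℕ, Filter.Tendsto (fun k => fn (φ k) (D p)) Filter.atTop (𝓝 (L p)) := by
    intro p
    rw [tendsto_pi_nhds] at hφtend
    exact hφtend p
  -- Banach-Alaoglu setup
  have hK : IsCompact (WeakDual.toStrongDual ⁻¹' Metric.closedBall (0 : StrongDual ℝ X) 1) :=
    WeakDual.isCompact_closedBall (𝕜 := ℝ) (E := X) (0 : StrongDual ℝ X) 1
  have humem : ∀ (ψ : ℕ → ℕ) (n : ℕ), (StrongDual.toWeakDual (fn (ψ n))) ∈
      (WeakDual.toStrongDual ⁻¹' Metric.closedBall (0 : StrongDual ℝ X) 1) := by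
    intro ψ n
    simp only [Set.mem_preimage, mem_closedBall_zero_iff]
    rw [show WeakDual.toStrongDual (StrongDual.toWeakDual (fn (ψ n))) = fn (ψ n) from rfl]
    rw [hfn1]
  -- evaluation of cluster points
  have evalCl : ∀ (ψ : ℕ → ℕ) (h' : WeakDual ℝ X),
      ClusterPt h' (Filter.map (fun n => StrongDual.toWeakDual (fn (ψ n))) Filter.atTop) →
      ∀ z : X, ClusterPt (h' z) (Filter.map (fun n => fn (ψ n) z) Filter.atTop) := by
    intro ψ h' hcl z
    have := hcl.map ((WeakDual.eval_continuous z).continuousAt) Filter.tendsto_map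
    rwa [Filter.map_map] at this
  -- pick the weak-star cluster point of the subsequence
  obtain ⟨g', hg'K, hg'cl⟩ := hK.exists_clusterPt
    (f := Filter.map (fun n => StrongDual.toWeakDual (fn (φ n))) Filter.atTop)
    (le_principal_iff.2 (Filter.mem_map.2 (Filter.Eventually.of_forall (humem φ))))
  set g : X →L[ℝ] ℝ := WeakDual.toStrongDual g' with hgdef
  have hgZ : g ∈ Z := clusterZ (fun n => fn (φ n)) (fun n => hfnZ _) g' hg'cl
  -- fn (φ k) x → 1
  have htendx : Filter.Tendsto (fun k => fn (φ k) x) Filter.atTop (𝓝 (1 : ℝ)) := by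
    have hlow : ∀ k : ℕ, 1 - 1/(k+1) ≤ fn (φ k) x := by
      intro k
      have h1 : (1 : ℝ) - 1/(φ k + 1) < fn (φ k) x := hfnx (φ k)
      have hle : (k:ℝ) ≤ φ k := by exact_mod_cast hφmono.le_apply
      have h2 : (1 : ℝ)/(φ k + 1) ≤ 1/(k+1) := by
        apply one_div_le_one_div_of_le (by positivity)
        linarith
      linarith
    have hup : ∀ k : ℕ, fn (φ k) x ≤ 1 := by
      intro k
      calc fn (φ k) x ≤ ‖fn (φ k) x‖ := le_abs_self _
        _ ≤ ‖fn (φ k)‖ * ‖x‖ := (fn (φ k)).le_opNorm _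
        _ = 1 := by rw [hfn1, hx, one_mul]
    have hlim : Filter.Tendsto (fun k : ℕ => 1 - 1/((k:ℝ)+1)) Filter.atTop (𝓝 (1 : ℝ)) := by
      have := tendsto_one_div_add_atTop_nhds_zero_nat (𝕜 := ℝ)
      have h2 := Filter.Tendsto.sub
        (tendsto_const_nhds : Filter.Tendsto (fun _ : ℕ => (1:ℝ)) Filter.atTop (𝓝 1)) this
      simpa using h2
    exact tendsto_of_tendsto_of_tendsto_of_le_of_le hlim tendsto_const_nhds hlow hup
  have hgx : g x = 1 := by
    have hcl := evalCl φ g' hg'cl x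
    have := aux_clusterPt_eq hcl htendx
    rw [hgdef, WeakDual.toStrongDual_apply]
    exact this
  have hgnorm : ‖g‖ = 1 := by
    have hle : ‖g‖ ≤ 1 := by
      have := hg'K
      simpa only [Set.mem_preimage, mem_closedBall_zero_iff] using this
    have hge : 1 ≤ ‖g‖ := by
      have := g.le_opNorm x
      rw [hx, mul_one] at this
      calc (1:ℝ) = g x := hgx.symm
        _ ≤ ‖g x‖ := le_abs_self _
        _ ≤ ‖g‖ := this
    linarith
  -- full weak-star convergence of the subsequence to g
  have conv : ∀ z : X, Filter.Tendsto (fun k => fn (φ k) z) Filter.atTop (𝓝 (g z)) := by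
    intro z
    by_contra hnot
    rw [Metric.tendsto_atTop] at hnot
    push_neg at hnot
    obtain ⟨δ, hδ, hfreq⟩ := hnot
    obtain ⟨ψ, hψmono, hψ⟩ := Filter.extraction_of_frequently_atTop (P := fun n =>
        δ ≤ dist (fn (φ n) z) (g z)) (Filter.frequently_atTop'.2 <| by
      intro N
      obtain ⟨n, hn, hd⟩ := hfreq (N+1)
      exact ⟨n, by omega, hd⟩)
    -- cluster point of the sub-subsequence
    obtain ⟨h', _hh'K, hh'cl⟩ := hK.exists_clusterPt
      (f := Filter.map (fun n => StrongDual.toWeakDual (fn (φ (ψ n)))) Filter.atTop)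
      (le_principal_iff.2 (Filter.mem_map.2 (Filter.Eventually.of_forall (humem (fun n => φ (ψ n))))))
    have hh'Z : WeakDual.toStrongDual h' ∈ Z :=
      clusterZ (fun n => fn (φ (ψ n))) (fun n => hfnZ _) h' hh'cl
    -- h' and g agree on the norming family
    have hagree : ∀ p : ℕ × ℕ, WeakDual.toStrongDual h' (D p) = g (D p) := by
      intro p
      have ht1 : Filter.Tendsto (fun k => fn (φ (ψ k)) (D p)) Filter.atTop (𝓝 (L p)) :=
        (hφp p).comp hψmono.tendsto_atTop
      have h1 : h' (D p) = L p := aux_clusterPt_eq (evalCl (fun n => φ (ψ n)) h' hh'cl (D p)) ht1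
      have h2 : g (D p) = L p := by
        have := aux_clusterPt_eq (evalCl φ g' hg'cl (D p)) (hφp p)
        rw [hgdef, WeakDual.toStrongDual_apply]
        exact this
      rw [WeakDual.toStrongDual_apply, h1, h2]
    have heq : WeakDual.toStrongDual h' = g := by
      have hdiff : WeakDual.toStrongDual h' - g ∈ Z := Z.sub_mem hh'Z hgZ
      have hzero : ∀ p : ℕ × ℕ, (WeakDual.toStrongDual h' - g) (D p) = 0 := by
        intro p
        rw [ContinuousLinearMap.sub_apply, hagree p, sub_self]
      have := normZ _ hdiff hzero
      exact sub_eq_zero.mp this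
    -- but h' z is far from g z
    have hfar : δ ≤ dist (h' z) (g z) := by
      have hS : IsClosed {t : ℝ | δ ≤ dist t (g z)} :=
        isClosed_le continuous_const (continuous_id.dist continuous_const)
      exact aux_clusterPt_mem (S := {t : ℝ | δ ≤ dist t (g z)}) hS (fun n => hψ n)
        (evalCl (fun n => φ (ψ n)) h' hh'cl z)
    have : h' z = g z := by
      rw [← heq, WeakDual.toStrongDual_apply]
    rw [this, dist_self] at hfar
    linarith
  -- apply the Kadec-Klee property and derive a contradiction
  have hKKapp := hKK (fun k => fn (φ k)) g (fun k => hfn1 _) hgnorm conv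
  have hev : ∀ᶠ k in Filter.atTop, ‖fn (φ k) - g‖ < ε := hKKapp.eventually (gt_mem_nhds hε)
  obtain ⟨k, hk⟩ := hev.exists
  have := hfnbad (φ k) g hgnorm hgx
  rw [norm_sub_rev] at hk
  linarith
end

section
/- Let X be a reflexive Banach space, Y a strictly convex Banach space, and T : X → Y a bounded operator with ‖T‖ = 1 that attains its norm at some x₀ ∈ S_X, i.e., ‖T(x₀)‖ = 1. If additionally the norm of X locally depends upon finitely many coordinates near x₀ (there exist ε > 0, f_1, …, f_N ∈ X* and continuous φ : ℝ^N → ℝ with ‖y‖ = φ(f_1(y),…,f_N(y)) for ‖y − x₀‖ < ε), then T has finite rank — more precisely, T vanishes on the finite-codimensional subspace ∩_{i=1}^N ker(f_i). -/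
/-- A norm-one norm-attaining operator from a reflexive space whose norm
locally depends upon finitely many coordinates near the attaining point, into a strictly
convex space, vanishes on the finite-codimensional subspace `⋂ ker fᵢ` (so it has finite
rank). -/
theorem stmt_15 {X Y : Type*} [NormedAddCommGroup X] [NormedSpace ℝ X] [CompleteSpace X]
    [NormedAddCommGroup Y] [NormedSpace ℝ Y] [CompleteSpace Y] [StrictConvexSpace ℝ Y]
    (hrefl : Function.Surjective (NormedSpace.inclusionInDoubleDual ℝ X))
    (T : X →L[ℝ] Y) (hT : ‖T‖ = 1)
    (x₀ : X) (hx₀ : ‖x₀‖ = 1) (hatt : ‖T x₀‖ = 1)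
    (ε : ℝ) (hε : 0 < ε) (N : ℕ) (f : Fin N → X →L[ℝ] ℝ)
    (φ : (Fin N → ℝ) → ℝ) (hφ : Continuous φ)
    (hloc : ∀ y : X, ‖y - x₀‖ < ε → ‖y‖ = φ (fun i => f i y)) :
    (∀ v : X, (∀ i, f i v = 0) → T v = 0) ∧
      FiniteDimensional ℝ (LinearMap.range (T : X →ₗ[ℝ] Y)) := by
  have hφx₀ : φ (fun i => f i x₀) = 1 := by
    rw [← hloc x₀ (by simpa using hε), hx₀]
  have key : ∀ v : X, (∀ i, f i v = 0) → T v = 0 := by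
    intro v hv
    rcases eq_or_ne v 0 with rfl | hv0
    · simp
    have hvpos : 0 < ‖v‖ := norm_pos_iff.mpr hv0
    set t : ℝ := ε / (2 * ‖v‖) with ht
    have htpos : 0 < t := div_pos hε (by positivity)
    have hsmall : ‖t • v‖ < ε := by
      rw [norm_smul, Real.norm_eq_abs, abs_of_pos htpos, ht, div_mul_eq_mul_div]
      rw [div_lt_iff₀ (by positivity)]
      nlinarith
    have hnorm : ∀ w : X, (∀ i, f i w = 0) → ‖w‖ < ε → ‖x₀ + w‖ = 1 := by
      intro w hw hwε
      have := hloc (x₀ + w) (by simpa using hwε)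
      rw [this]
      have : (fun i => f i (x₀ + w)) = fun i => f i x₀ := by
        funext i; simp [hw i]
      rw [this, hφx₀]
    have h1 : ‖x₀ + t • v‖ = 1 := hnorm _ (fun i => by simp [hv i]) hsmall
    have h2 : ‖x₀ + (-t) • v‖ = 1 := hnorm _ (fun i => by simp [hv i]) (by simpa using hsmall)
    set a := T (x₀ + t • v) with ha
    set b := T (x₀ + (-t) • v) with hb
    have hna : ‖a‖ ≤ 1 := by
      calc ‖a‖ ≤ ‖T‖ * ‖x₀ + t • v‖ := T.le_opNorm _
      _ = 1 := by rw [hT, h1, one_mul]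
    have hnb : ‖b‖ ≤ 1 := by
      calc ‖b‖ ≤ ‖T‖ * ‖x₀ + (-t) • v‖ := T.le_opNorm _
      _ = 1 := by rw [hT, h2, one_mul]
    have hab : a + b = (2:ℝ) • T x₀ := by
      rw [ha, hb, ← map_add, two_smul ℝ, ← map_add]
      congr 1
      module
    have habn : ‖a + b‖ = 2 := by
      rw [hab, norm_smul]
      simp [hatt]
    have hea : ‖a‖ = 1 := by
      by_contra h
      have : ‖a‖ < 1 := lt_of_le_of_ne hna h
      have := norm_add_le a b
      linarith
    have heb : ‖b‖ = 1 := by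
      by_contra h
      have : ‖b‖ < 1 := lt_of_le_of_ne hnb h
      have := norm_add_le a b
      linarith
    have : a = b := eq_of_norm_eq_of_norm_add_eq (by rw [hea, heb]) (by rw [habn, hea, heb]; norm_num)
    have h2t : T ((2 * t) • v) = 0 := by
      have : a - b = T ((2 * t) • v) := by
        rw [ha, hb, ← map_sub]
        congr 1
        module
      rw [← this]; simp [‹a = b›]
    rw [map_smul] at h2t
    have h2t0 : (2 * t : ℝ) ≠ 0 := by positivity
    simpa [h2t0] using h2t
  refine ⟨key, ?_⟩
  -- T factors through X ⧸ ker g where g x = fun i => f i x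
  set g : X →ₗ[ℝ] (Fin N → ℝ) := LinearMap.pi (fun i => (f i : X →ₗ[ℝ] ℝ)) with hg
  have hker : LinearMap.ker g ≤ LinearMap.ker (T : X →ₗ[ℝ] Y) := by
    intro x hx
    simp only [LinearMap.mem_ker] at hx ⊢
    exact key x (fun i => congrFun hx i)
  have : FiniteDimensional ℝ (X ⧸ LinearMap.ker g) := by
    have e := g.quotKerEquivRange
    exact Module.Finite.equiv e.symm
  have hrange : LinearMap.range (T : X →ₗ[ℝ] Y)
      = LinearMap.range ((LinearMap.ker g).liftQ (T : X →ₗ[ℝ] Y) hker) := by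
    rw [Submodule.range_liftQ]
  rw [hrange]
  exact Module.Finite.range _
end
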